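/- arXiv:1901.02220 — 5 statements merged into one kernel-verified Lean document; each statement's English description precedes it below -/
import Mathlib

section
/- Let g : ℝ → ℝ be defined by g(x) = 2·max(x,0) − 4·max(x−1/2,0) + 2·max(x−1,0), and for s ∈ ℕ let g_s denote the s-fold composition of g with itself (g_1 = g). Then for every s ∈ ℕ and every x ∈ [0,1], g_s(x) = ∑_{k=0}^{2^{s−1}−1} g(2^{s−1}·x − k). -/
/-- The "hat function" `g(x) = 2·max(x,0) − 4·max(x−1/2,0) + 2·max(x−1,0)`. -/
noncomputable def hatg (x : ℝ) : ℝ :=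
  2 * max x 0 - 4 * max (x - 1/2) 0 + 2 * max (x - 1) 0

lemma hatg_nonpos {t : ℝ} (h : t ≤ 0) : hatg t = 0 := by
  unfold hatg
  rw [max_eq_right h, max_eq_right (by linarith), max_eq_right (by linarith)]
  ring

lemma hatg_ge_one {t : ℝ} (h : 1 ≤ t) : hatg t = 0 := by
  unfold hatg
  rw [max_eq_left (by linarith), max_eq_left (by linarith), max_eq_left (by linarith)]
  ring

lemma hatg_left {t : ℝ} (h0 : 0 ≤ t) (h1 : t ≤ 1/2) : hatg t = 2 * t := by
  unfold hatg
  rw [max_eq_left h0, max_eq_right (by linarith), max_eq_right (by linarith)]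
  ring

lemma hatg_right {t : ℝ} (h0 : 1/2 ≤ t) (h1 : t ≤ 1) : hatg t = 2 - 2 * t := by
  unfold hatg
  rw [max_eq_left (by linarith), max_eq_left (by linarith), max_eq_right (by linarith)]
  ring

lemma hatg_symm (t : ℝ) : hatg (1 - t) = hatg t := by
  rcases le_total t 0 with h | h
  · rw [hatg_nonpos h, hatg_ge_one (by linarith)]
  rcases le_total t (1/2) with h1 | h1
  · rw [hatg_left h h1, hatg_right (by linarith) (by linarith)]; ring
  rcases le_total t 1 with h2 | h2
  · rw [hatg_right h1 h2, hatg_left (by linarith) (by linarith)]; ring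
  · rw [hatg_ge_one h2, hatg_nonpos (by linarith)]

lemma hatg_mem {x : ℝ} (hx : x ∈ Set.Icc (0:ℝ) 1) : hatg x ∈ Set.Icc (0:ℝ) 1 := by
  obtain ⟨h0, h1⟩ := hx
  rcases le_total x (1/2) with h | h
  · rw [hatg_left h0 h]; constructor <;> linarith
  · rw [hatg_right h h1]; constructor <;> linarith

lemma doubling (n : ℕ) {x : ℝ} (hx : x ∈ Set.Icc (0:ℝ) 1) :
    ∑ k ∈ Finset.range (2 ^ n), hatg ((2:ℝ) ^ n * hatg x - k)
      = ∑ k ∈ Finset.range (2 ^ (n + 1)), hatg ((2:ℝ) ^ (n + 1) * x - k) := by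
  obtain ⟨h0, h1⟩ := hx
  have hsplit : (2:ℕ) ^ (n + 1) = 2 ^ n + 2 ^ n := by ring
  rw [hsplit, Finset.sum_range_add]
  rcases le_total x (1/2) with h | h
  · rw [hatg_left h0 h]
    have hz : ∑ i ∈ Finset.range (2 ^ n), hatg ((2:ℝ) ^ (n+1) * x - ↑(2 ^ n + i)) = 0 := by
      apply Finset.sum_eq_zero
      intro i _
      apply hatg_nonpos
      have : ((2:ℝ)) ^ (n+1) * x ≤ 2 ^ n := by
        rw [pow_succ]
        nlinarith [pow_pos (by norm_num : (0:ℝ) < 2) n]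
      push_cast
      have : (0:ℝ) ≤ (i:ℝ) := Nat.cast_nonneg i
      linarith
    rw [hz, add_zero]
    apply Finset.sum_congr rfl
    intro k _
    congr 1
    rw [pow_succ]
    ring
  · rw [hatg_right h h1]
    have hz : ∑ k ∈ Finset.range (2 ^ n), hatg ((2:ℝ) ^ (n+1) * x - ↑k) = 0 := by
      apply Finset.sum_eq_zero
      intro k hk
      apply hatg_ge_one
      have hk' : (k:ℝ) ≤ 2 ^ n - 1 := by
        have := Finset.mem_range.mp hk
        have : (k:ℝ) + 1 ≤ (2:ℝ) ^ n := by exact_mod_cast this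
        linarith
      have : (2:ℝ) ^ n ≤ (2:ℝ) ^ (n+1) * x := by
        rw [pow_succ]
        nlinarith [pow_pos (by norm_num : (0:ℝ) < 2) n]
      linarith
    rw [hz, zero_add]
    rw [← Finset.sum_range_reflect (fun i => hatg ((2:ℝ) ^ (n+1) * x - ↑(2 ^ n + i)))]
    apply Finset.sum_congr rfl
    intro k hk
    have hk' : k < 2 ^ n := Finset.mem_range.mp hk
    have hcast : ((2 ^ n + (2 ^ n - 1 - k) : ℕ) : ℝ) = 2 ^ (n+1) - 1 - k := by
      have h1' : k ≤ 2 ^ n - 1 := Nat.le_sub_one_of_lt hk'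
      have h2' : 1 ≤ 2 ^ n := Nat.one_le_two_pow
      push_cast [Nat.sub_sub, Nat.cast_sub (by omega : 1 + k ≤ 2 ^ n)]
      ring
    rw [hcast]
    rw [← hatg_symm ((2:ℝ) ^ (n+1) * x - (2 ^ (n+1) - 1 - ↑k))]
    congr 1
    rw [pow_succ]
    ring

lemma aux (n : ℕ) : ∀ x ∈ Set.Icc (0:ℝ) 1,
    hatg^[n + 1] x = ∑ k ∈ Finset.range (2 ^ n), hatg ((2:ℝ) ^ n * x - k) := by
  induction n with
  | zero =>
    intro x _
    simp [hatg]
  | succ n ih =>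
    intro x hx
    rw [Function.iterate_succ_apply]
    rw [ih (hatg x) (hatg_mem hx)]
    exact doubling n hx

/-- For every `s ≥ 1` and every `x ∈ [0,1]`, the `s`-fold composition `g_s = g∘⋯∘g`
satisfies `g_s(x) = ∑_{k=0}^{2^{s−1}−1} g(2^{s−1}·x − k)`. -/
theorem stmt0 (s : ℕ) (hs : 1 ≤ s) (x : ℝ) (hx : x ∈ Set.Icc (0:ℝ) 1) :
    hatg^[s] x = ∑ k ∈ Finset.range (2 ^ (s - 1)), hatg ((2:ℝ) ^ (s - 1) * x - k) := by
  obtain ⟨n, rfl⟩ : ∃ n, s = n + 1 := ⟨s - 1, (Nat.succ_pred_eq_of_pos hs).symm⟩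
  simp only [Nat.add_sub_cancel]
  exact aux n x hx
end

section
/- Let ‖·‖ and ‖·‖' be two norms on ℝ^d with unit balls B and B' respectively. Then for every ε > 0, the ε-covering number of B with respect to ‖·‖' satisfies (1/ε)^d · vol(B)/vol(B') ≤ N(ε; B, ‖·‖') ≤ vol((2/ε)·B + B') / vol(B'), where + denotes Minkowski sum and vol denotes Lebesgue measure. -/
set_option maxHeartbeats 1000000

open MeasureTheory ENNReal Pointwise


lemma aux_norm {d : ℕ} (N : (Fin d → ℝ) → ℝ) (h0 : ∀ x, N x = 0 ↔ x = 0)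
    (hh : ∀ (a : ℝ) x, N (a • x) = |a| * N x) (ht : ∀ x y, N (x + y) ≤ N x + N y) :
    ∃ c C : ℝ, 0 < c ∧ 0 < C ∧ (∀ x, c * ‖x‖ ≤ N x) ∧ (∀ x, N x ≤ C * ‖x‖) ∧ Continuous N := by
  classical
  have hN0 : N 0 = 0 := (h0 0).2 rfl
  have hneg : ∀ x, N (-x) = N x := fun x => by
    have := hh (-1) x; simpa using this
  have hnn : ∀ x, 0 ≤ N x := fun x => by
    have h1 := ht x (-x)
    rw [add_neg_cancel, hN0, hneg] at h1
    linarith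
  have hsum : ∀ (s : Finset (Fin d)) (f : Fin d → (Fin d → ℝ)),
      N (∑ i ∈ s, f i) ≤ ∑ i ∈ s, N (f i) := by
    intro s f
    induction s using Finset.induction with
    | empty => simp [hN0]
    | insert _ _ hi ih =>
      rw [Finset.sum_insert hi, Finset.sum_insert hi]
      exact (ht _ _).trans (by linarith)
  set C₀ : ℝ := ∑ i : Fin d, N (fun j => if i = j then (1:ℝ) else 0) with hC₀
  have hC₀nn : 0 ≤ C₀ := Finset.sum_nonneg fun i _ => hnn _
  set C : ℝ := C₀ + 1 with hC
  have hCpos : 0 < C := by positivity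
  have hupper : ∀ x, N x ≤ C * ‖x‖ := by
    intro x
    have hx : N x ≤ C₀ * ‖x‖ := by
      conv_lhs => rw [pi_eq_sum_univ x]
      refine (hsum _ _).trans ?_
      rw [hC₀, Finset.sum_mul]
      refine Finset.sum_le_sum fun i _ => ?_
      rw [hh]
      have h1 : |x i| ≤ ‖x‖ := by
        have := norm_le_pi_norm x i
        simpa [Real.norm_eq_abs] using this
      have := hnn (fun j => if i = j then (1:ℝ) else 0)
      calc |x i| * N (fun j => if i = j then (1:ℝ) else 0)
          ≤ ‖x‖ * N (fun j => if i = j then (1:ℝ) else 0) := by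
            apply mul_le_mul_of_nonneg_right h1 this
        _ = N (fun j => if i = j then (1:ℝ) else 0) * ‖x‖ := mul_comm _ _
    nlinarith [norm_nonneg x]
  have hcont : Continuous N := by
    have hlip : LipschitzWith (Real.toNNReal C) N := by
      apply LipschitzWith.of_dist_le_mul
      intro x y
      rw [Real.dist_eq, dist_eq_norm]
      have h1 : N x - N y ≤ N (x - y) := by
        have := ht (x - y) y; simp at this; linarith
      have h2 : N y - N x ≤ N (x - y) := by
        have := ht (y - x) x
        simp at this
        have h3 : N (y - x) = N (x - y) := by
          rw [show y - x = -(x - y) by abel, hneg]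
        linarith
      have h4 : |N x - N y| ≤ N (x - y) := abs_sub_le_iff.2 ⟨h1, h2⟩
      refine h4.trans ((hupper _).trans ?_)
      have : (C : ℝ) ≤ Real.toNNReal C := by
        rw [Real.coe_toNNReal _ hCpos.le]
      exact mul_le_mul_of_nonneg_right this (norm_nonneg _)
    exact hlip.continuous
  -- lower bound
  by_cases hall : ∀ x : Fin d → ℝ, x = 0
  · exact ⟨1, C, one_pos, hCpos, fun x => by rw [hall x]; simp [hN0], hupper, hcont⟩
  · push_neg at hall
    obtain ⟨x₀, hx₀⟩ := hall
    have hsne : (Metric.sphere (0 : Fin d → ℝ) 1).Nonempty := by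
      refine ⟨‖x₀‖⁻¹ • x₀, ?_⟩
      have : ‖x₀‖ ≠ 0 := norm_ne_zero_iff.2 hx₀
      simp [norm_smul, abs_of_nonneg (inv_nonneg.2 (norm_nonneg x₀)), inv_mul_cancel₀ this]
    obtain ⟨z, hz, hzmin⟩ := (isCompact_sphere (0 : Fin d → ℝ) 1).exists_isMinOn hsne
      hcont.continuousOn
    have hz1 : ‖z‖ = 1 := by simpa using hz
    have hzne : z ≠ 0 := by
      intro h; rw [h] at hz1; simp at hz1
    have hc : 0 < N z := lt_of_le_of_ne (hnn z) (Ne.symm (fun h => hzne ((h0 z).1 h)))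
    refine ⟨N z, C, hc, hCpos, ?_, hupper, hcont⟩
    intro x
    rcases eq_or_ne x 0 with rfl | hx
    · simp [hN0]
    · have hnx : ‖x‖ ≠ 0 := norm_ne_zero_iff.2 hx
      set u : Fin d → ℝ := ‖x‖⁻¹ • x with hu
      have hu1 : u ∈ Metric.sphere (0 : Fin d → ℝ) 1 := by
        simp [hu, norm_smul, abs_of_nonneg (inv_nonneg.2 (norm_nonneg x)),
          inv_mul_cancel₀ hnx]
      have hxu : x = ‖x‖ • u := by rw [hu, smul_smul, mul_inv_cancel₀ hnx, one_smul]
      have : N x = ‖x‖ * N u := by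
        conv_lhs => rw [hxu]
        rw [hh, abs_of_nonneg (norm_nonneg x)]
      rw [this, mul_comm (N z) ‖x‖]
      exact mul_le_mul_of_nonneg_left (hzmin hu1) (norm_nonneg x)

/-- Volume bounds on covering numbers (Wainwright, Lemma 5.7).  Let `‖·‖ = N₁` and
`‖·‖' = N₂` be two norms on `ℝ^d` with unit balls `B` and `B'`.  Then for every `ε > 0`
the ε-covering number `N(ε; B, ‖·‖')` of `B` in the norm `‖·‖'` (the minimal number of
points `x₁,…,x_N ∈ B` with `B ⊆ ∪_j (x_j + ε·B')`) satisfies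
`(1/ε)^d · vol(B)/vol(B') ≤ N(ε; B, ‖·‖') ≤ vol((2/ε)·B + B')/vol(B')`,
expressed here as: every such covering has at least `(1/ε)^d · vol(B)/vol(B')` points, and
there exists such a covering with at most `vol((2/ε)·B + B')/vol(B')` points. -/
theorem stmt6 (d : ℕ) (N₁ N₂ : (Fin d → ℝ) → ℝ)
    (hN₁0 : ∀ x, N₁ x = 0 ↔ x = 0) (hN₁h : ∀ (a : ℝ) x, N₁ (a • x) = |a| * N₁ x)
    (hN₁t : ∀ x y, N₁ (x + y) ≤ N₁ x + N₁ y)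
    (hN₂0 : ∀ x, N₂ x = 0 ↔ x = 0) (hN₂h : ∀ (a : ℝ) x, N₂ (a • x) = |a| * N₂ x)
    (hN₂t : ∀ x y, N₂ (x + y) ≤ N₂ x + N₂ y)
    (B B' : Set (Fin d → ℝ)) (hB : B = {x | N₁ x ≤ 1}) (hB' : B' = {x | N₂ x ≤ 1})
    (ε : ℝ) (hε : 0 < ε) :
    (∀ S : Finset (Fin d → ℝ), ↑S ⊆ B → B ⊆ ⋃ x ∈ S, {x} + ε • B' →
      ENNReal.ofReal ((1/ε) ^ d) * volume B / volume B' ≤ (S.card : ℝ≥0∞)) ∧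
    (∃ S : Finset (Fin d → ℝ), ↑S ⊆ B ∧ B ⊆ ⋃ x ∈ S, {x} + ε • B' ∧
      (S.card : ℝ≥0∞) ≤ volume ((2/ε) • B + B') / volume B') := by
  classical
  obtain ⟨c₁, C₁, hc₁, hC₁, hlow₁, hup₁, hcont₁⟩ := aux_norm N₁ hN₁0 hN₁h hN₁t
  obtain ⟨c₂, C₂, hc₂, hC₂, hlow₂, hup₂, hcont₂⟩ := aux_norm N₂ hN₂0 hN₂h hN₂t
  have hN₂z : N₂ 0 = 0 := (hN₂0 0).2 rfl
  have hsym : ∀ u v : Fin d → ℝ, N₂ (u - v) = N₂ (v - u) := by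
    intro u v
    have := hN₂h (-1) (v - u)
    simpa [show (-1 : ℝ) • (v - u) = u - v by module] using this
  -- translation invariance of volume for singleton Minkowski sums
  have hvol_trans : ∀ (a : Fin d → ℝ) (s : Set (Fin d → ℝ)), volume ({a} + s) = volume s := by
    intro a s
    rw [Set.singleton_add]
    have : (fun x => a + x) '' s = a +ᵥ s := rfl
    rw [this, measure_vadd]
  -- membership in singleton Minkowski sum
  have hsing : ∀ (a : Fin d → ℝ) (t : Set (Fin d → ℝ)) (z : Fin d → ℝ),
      z ∈ {a} + t ↔ z - a ∈ t := by
    intro a t z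
    rw [Set.singleton_add, Set.mem_image]
    constructor
    · rintro ⟨w, hw, rfl⟩; simpa using hw
    · intro h; exact ⟨z - a, h, by abel⟩
  -- scaled ball description
  have hscale : ∀ r : ℝ, 0 < r → r • B' = {z | N₂ z ≤ r} := by
    intro r hr
    ext z
    rw [Set.mem_smul_set, hB']
    constructor
    · rintro ⟨w, hw, rfl⟩
      rw [Set.mem_setOf_eq]
      rw [hN₂h, abs_of_pos hr]
      calc r * N₂ w ≤ r * 1 := by
            exact mul_le_mul_of_nonneg_left hw hr.le
        _ = r := mul_one r
    · intro h
      refine ⟨r⁻¹ • z, ?_, by rw [smul_smul, mul_inv_cancel₀ hr.ne', one_smul]⟩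
      rw [Set.mem_setOf_eq, hN₂h, abs_of_pos (inv_pos.2 hr)]
      rw [inv_mul_le_iff₀ hr, mul_one]
      exact h
  have hball : ∀ (a : Fin d → ℝ) (r : ℝ), 0 < r →
      {a} + r • B' = {z | N₂ (z - a) ≤ r} := by
    intro a r hr
    ext z
    rw [hsing, hscale r hr]
    rfl
  have hB'ball : ∀ a : Fin d → ℝ, {a} + B' = {z | N₂ (z - a) ≤ 1} := by
    intro a
    ext z
    rw [hsing, hB']
    rfl
  have hmeas : ∀ (a : Fin d → ℝ) (r : ℝ), MeasurableSet {z | N₂ (z - a) ≤ r} := by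
    intro a r
    exact (isClosed_le ((hcont₂.comp (continuous_id.sub continuous_const))) continuous_const).measurableSet
  have hfr : Module.finrank ℝ (Fin d → ℝ) = d := Module.finrank_fin_fun ℝ
  have hvol_ball : ∀ (a : Fin d → ℝ), volume ({a} + ε • B') =
      ENNReal.ofReal (ε ^ d) * volume B' := by
    intro a
    rw [hvol_trans, Measure.addHaar_smul_of_nonneg volume hε.le, hfr]
  -- positivity of volume of B'
  have hB'0 : volume B' ≠ 0 := by
    have hsub : Metric.ball (0 : Fin d → ℝ) (1 / C₂) ⊆ B' := by
      intro z hz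
      rw [Metric.mem_ball, dist_zero_right] at hz
      rw [hB', Set.mem_setOf_eq]
      have := hup₂ z
      have h2 : C₂ * ‖z‖ ≤ C₂ * (1 / C₂) := mul_le_mul_of_nonneg_left hz.le hC₂.le
      rw [mul_one_div, div_self hC₂.ne'] at h2
      linarith
    have := Metric.measure_ball_pos volume (0 : Fin d → ℝ) (by positivity : (0:ℝ) < 1 / C₂)
    exact (lt_of_lt_of_le this (measure_mono hsub)).ne'
  have hB'top : volume B' ≠ ⊤ := by
    have hsub : B' ⊆ Metric.closedBall (0 : Fin d → ℝ) (1 / c₂) := by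
      intro z hz
      rw [hB', Set.mem_setOf_eq] at hz
      rw [Metric.mem_closedBall, dist_zero_right]
      have := hlow₂ z
      rw [le_div_iff₀ hc₂, mul_comm]
      linarith
    exact ((measure_mono hsub).trans_lt
      (isCompact_closedBall _ _).measure_lt_top).ne
  constructor
  · -- lower bound
    intro S hSsub hcov
    rw [ENNReal.div_le_iff hB'0 hB'top]
    have h1 : volume B ≤ (S.card : ℝ≥0∞) * (ENNReal.ofReal (ε ^ d) * volume B') := by
      calc volume B ≤ volume (⋃ x ∈ S, {x} + ε • B') := measure_mono hcov
        _ ≤ ∑ x ∈ S, volume ({x} + ε • B') := measure_biUnion_finset_le S _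
        _ = ∑ _x ∈ S, ENNReal.ofReal (ε ^ d) * volume B' :=
            Finset.sum_congr rfl fun x _ => hvol_ball x
        _ = (S.card : ℝ≥0∞) * (ENNReal.ofReal (ε ^ d) * volume B') := by
            rw [Finset.sum_const, nsmul_eq_mul]
    calc ENNReal.ofReal ((1/ε) ^ d) * volume B
        ≤ ENNReal.ofReal ((1/ε) ^ d) *
            ((S.card : ℝ≥0∞) * (ENNReal.ofReal (ε ^ d) * volume B')) :=
          mul_le_mul_right h1 _
      _ = (ENNReal.ofReal ((1/ε) ^ d) * ENNReal.ofReal (ε ^ d)) *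
            ((S.card : ℝ≥0∞) * volume B') := by ring
      _ = (S.card : ℝ≥0∞) * volume B' := by
          rw [← ENNReal.ofReal_mul (by positivity), ← mul_pow, one_div,
            inv_mul_cancel₀ hε.ne', one_pow, ENNReal.ofReal_one, one_mul]
  · -- upper bound
    set a : (Fin d → ℝ) → (Fin d → ℝ) := fun x => (2 / ε) • x with ha
    have hcount : ∀ S : Finset (Fin d → ℝ), ↑S ⊆ B →
        ((S : Set (Fin d → ℝ)).Pairwise fun x y => ε < N₂ (x - y)) →
        (S.card : ℝ≥0∞) * volume B' ≤ volume ((2/ε) • B + B') := by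
      intro S hSB hsep
      have hdisj : (↑S : Set (Fin d → ℝ)).PairwiseDisjoint (fun x => {a x} + B') := by
        intro x hx y hy hxy
        rw [Function.onFun, Set.disjoint_left]
        intro z hzx hzy
        rw [hB'ball, Set.mem_setOf_eq] at hzx hzy
        have h2 : N₂ (a x - a y) ≤ 2 := by
          have h3 := hN₂t (a x - z) (z - a y)
          have h4 : a x - z + (z - a y) = a x - a y := by abel
          rw [h4] at h3
          have h5 : N₂ (a x - z) = N₂ (z - a x) := hsym _ _
          linarith
        have h6 : N₂ (a x - a y) = (2/ε) * N₂ (x - y) := by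
          rw [ha]
          have : (2/ε) • x - (2/ε) • y = (2/ε) • (x - y) := (smul_sub _ _ _).symm
          rw [this, hN₂h, abs_of_pos (by positivity)]
        have h7 : ε < N₂ (x - y) := hsep hx hy hxy
        have h8 : (0:ℝ) < 2/ε := by positivity
        have h9 : (2/ε) * ε < (2/ε) * N₂ (x - y) := by
          exact mul_lt_mul_of_pos_left h7 h8
        rw [div_mul_cancel₀ 2 hε.ne'] at h9
        linarith
      have hsub : (⋃ x ∈ S, {a x} + B') ⊆ (2/ε) • B + B' := by
        intro z hz
        simp only [Set.mem_iUnion, exists_prop] at hz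
        obtain ⟨x, hx, hzx⟩ := hz
        refine Set.add_subset_add ?_ le_rfl hzx
        rw [Set.singleton_subset_iff]
        exact Set.smul_mem_smul_set (hSB hx)
      calc (S.card : ℝ≥0∞) * volume B' = ∑ x ∈ S, volume ({a x} + B') := by
            rw [Finset.sum_congr rfl fun x _ => hvol_trans (a x) B',
              Finset.sum_const, nsmul_eq_mul]
        _ = volume (⋃ x ∈ S, {a x} + B') := by
            refine (measure_biUnion_finset hdisj fun x _ => ?_).symm
            rw [hB'ball]
            exact hmeas _ _
        _ ≤ volume ((2/ε) • B + B') := measure_mono hsub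
    have hVtop : volume ((2/ε) • B + B') ≠ ⊤ := by
      have hsub : (2/ε) • B + B' ⊆
          Metric.closedBall (0 : Fin d → ℝ) ((2/ε) * (1/c₁) + 1/c₂) := by
        intro z hz
        rw [Set.mem_add] at hz
        obtain ⟨u, hu, v, hv, rfl⟩ := hz
        rw [Set.mem_smul_set] at hu
        obtain ⟨b, hb, rfl⟩ := hu
        rw [Metric.mem_closedBall, dist_zero_right]
        have hbB : N₁ b ≤ 1 := by rw [hB] at hb; exact hb
        have h1 : ‖b‖ ≤ 1 / c₁ := by
          rw [le_div_iff₀ hc₁, mul_comm]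
          have := hlow₁ b
          linarith
        have h2 : ‖v‖ ≤ 1 / c₂ := by
          rw [le_div_iff₀ hc₂, mul_comm]
          have := hlow₂ v
          have hvB : N₂ v ≤ 1 := by rw [hB'] at hv; exact hv
          linarith
        calc ‖(2/ε) • b + v‖ ≤ ‖(2/ε) • b‖ + ‖v‖ := norm_add_le _ _
          _ ≤ (2/ε) * (1/c₁) + 1/c₂ := by
              rw [norm_smul, Real.norm_eq_abs, abs_of_pos (by positivity : (0:ℝ) < 2/ε)]
              have h3 : (2/ε) * ‖b‖ ≤ (2/ε) * (1/c₁) :=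
                mul_le_mul_of_nonneg_left h1 (by positivity)
              linarith
      exact ((measure_mono hsub).trans_lt
        (isCompact_closedBall _ _).measure_lt_top).ne
    set P : Set ℕ := {n | ∃ S : Finset (Fin d → ℝ), ↑S ⊆ B ∧
      ((S : Set (Fin d → ℝ)).Pairwise fun x y => ε < N₂ (x - y)) ∧ S.card = n} with hP
    have hP0 : 0 ∈ P := ⟨∅, by simp, by simp, rfl⟩
    set Q : ℝ≥0∞ := volume ((2/ε) • B + B') / volume B' with hQ
    have hQtop : Q ≠ ⊤ := (ENNReal.div_lt_top hVtop hB'0).ne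
    have hcard_le : ∀ S : Finset (Fin d → ℝ), ↑S ⊆ B →
        ((S : Set (Fin d → ℝ)).Pairwise fun x y => ε < N₂ (x - y)) →
        (S.card : ℝ≥0∞) ≤ Q := by
      intro S h1 h2
      rw [hQ, ENNReal.le_div_iff_mul_le (Or.inl hB'0) (Or.inl hB'top)]
      exact hcount S h1 h2
    have hbdd : BddAbove P := by
      refine ⟨⌈Q.toReal⌉₊, fun n hn => ?_⟩
      obtain ⟨S, h1, h2, h3⟩ := hn
      have h4 : (n : ℝ≥0∞) ≤ Q := h3 ▸ hcard_le S h1 h2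
      have h5 : (n : ℝ) ≤ Q.toReal := by
        have := ENNReal.toReal_mono hQtop h4
        simpa using this
      exact_mod_cast h5.trans (Nat.le_ceil _)
    obtain ⟨S, hSB, hsep, hScard⟩ := Nat.sSup_mem ⟨0, hP0⟩ hbdd
    refine ⟨S, hSB, ?_, hcard_le S hSB hsep⟩
    intro y hy
    by_contra hyc
    have hfar : ∀ x ∈ S, ε < N₂ (y - x) := by
      intro x hx
      by_contra h
      push_neg at h
      exact hyc (Set.mem_biUnion hx (by rw [hball x ε hε]; exact h))
    have hynotin : y ∉ S := by
      intro h
      have := hfar y h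
      rw [sub_self, hN₂z] at this
      linarith
    have hins : (S.card + 1) ∈ P := by
      refine ⟨insert y S, ?_, ?_, Finset.card_insert_of_notMem hynotin⟩
      · rw [Finset.coe_insert]
        exact Set.insert_subset hy hSB
      · rw [Finset.coe_insert]
        refine (@Set.pairwise_insert_of_symm _ _ _ _ ⟨?_⟩).2 ⟨hsep, ?_⟩
        · intro u v huv
          rw [hsym]
          exact huv
        · intro b hb _
          exact hfar b hb
    have := le_csSup hbdd hins
    rw [hScard] at this
    omega
end

section
/- Let f : ℝ → ℝ be a continuous, non-constant, u-periodic function, and let h : ℝ → ℝ be a piecewise linear function with at most k linear pieces. If a ∈ ℕ is even and a/2 > k, then sup_{x ∈ [0,u]} |f(a·x) − h(x)| ≥ ξ(f), where ξ(f) = sup_{δ ∈ [0,u)} inf_{c,d ∈ ℝ} sup_{x ∈ [δ,δ+u]} |f(x) − (cx+d)| > 0. -/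
open Set

/-- Lower bound for approximating a dilated periodic function by a piecewise linear
function with few pieces.  Here `h` is piecewise linear with at most `k` pieces (ℝ is
covered by `k` intervals, i.e. order-connected sets, on each of which `h` is affine),
`a` is an even natural number with `a/2 > k`, and
`ξ(f) = sup_{δ ∈ [0,u)} inf_{c,d} sup_{x ∈ [δ,δ+u]} |f(x) − (cx+d)| > 0`.
Then `sup_{x ∈ [0,u]} |f(a·x) − h(x)| ≥ ξ(f)`. -/
theorem stmt13 (f : ℝ → ℝ) (u : ℝ) (hu : 0 < u) (hf : Continuous f)
    (hper : ∀ x, f (x + u) = f x) (hnc : ∃ x y, f x ≠ f y)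
    (h : ℝ → ℝ) (k : ℕ)
    (hpl : ∃ I : Fin k → Set ℝ, (⋃ j, I j) = Set.univ ∧
      ∀ j, (I j).OrdConnected ∧ ∃ c d : ℝ, ∀ x ∈ I j, h x = c * x + d)
    (a : ℕ) (ha : Even a) (hak : 2 * k < a) :
    (0 < ⨆ δ : Set.Ico (0:ℝ) u, ⨅ c : ℝ, ⨅ d : ℝ,
        ⨆ x : Set.Icc (δ : ℝ) ((δ : ℝ) + u), |f x - (c * x + d)|) ∧
    (⨆ δ : Set.Ico (0:ℝ) u, ⨅ c : ℝ, ⨅ d : ℝ,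
        ⨆ x : Set.Icc (δ : ℝ) ((δ : ℝ) + u), |f x - (c * x + d)|) ≤
      ⨆ x : Set.Icc (0:ℝ) u, |f ((a : ℝ) * x) - h x| := by
  have hP : Function.Periodic f u := hper
  have ha0 : 0 < a := by omega
  have haR : (0:ℝ) < (a:ℝ) := by exact_mod_cast ha0
  obtain ⟨I, hIunion, hIprop⟩ := hpl
  choose hOrd cc dd hcd using hIprop
  have hkne : Nonempty (Fin k) := by
    have h0 : (0:ℝ) ∈ ⋃ j, I j := by rw [hIunion]; trivial
    obtain ⟨j, -⟩ := Set.mem_iUnion.mp h0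
    exact ⟨j⟩
  -- a global bound for |f|
  obtain ⟨M, hM⟩ : ∃ M, ∀ y ∈ Icc (0:ℝ) u, |f y| ≤ M := by
    obtain ⟨C, hC⟩ := (isCompact_Icc (a := (0:ℝ)) (b := u)).exists_bound_of_continuousOn
      hf.continuousOn
    exact ⟨C, fun y hy => hC y hy⟩
  have hMg : ∀ x, |f x| ≤ M := by
    intro x
    obtain ⟨y, hy, hxy⟩ := hP.exists_mem_Ico₀ hu x
    rw [hxy]; exact hM y (Ico_subset_Icc_self hy)
  have hM0 : 0 ≤ M := le_trans (abs_nonneg _) (hMg 0)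
  -- every inner sup is nonneg, giving BddBelow for the infima
  have hsup_nonneg : ∀ (δ : ℝ) (c d : ℝ),
      0 ≤ ⨆ x : Icc δ (δ + u), |f x - (c * x + d)| :=
    fun δ c d => Real.iSup_nonneg fun _ => abs_nonneg _
  have hbdd_d : ∀ (δ c : ℝ), BddBelow (range fun d : ℝ =>
      ⨆ x : Icc δ (δ + u), |f x - (c * x + d)|) :=
    fun δ c => ⟨0, by rintro _ ⟨d, rfl⟩; exact hsup_nonneg δ c d⟩
  have hbdd_c : ∀ δ : ℝ, BddBelow (range fun c : ℝ =>
      ⨅ d : ℝ, ⨆ x : Icc δ (δ + u), |f x - (c * x + d)|) :=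
    fun δ => ⟨0, by rintro _ ⟨c, rfl⟩; exact Real.iInf_nonneg fun d => hsup_nonneg δ c d⟩
  have hIccne : ∀ δ : ℝ, Nonempty (Icc δ (δ + u)) :=
    fun δ => ⟨⟨δ, le_refl _, by linarith⟩⟩
  -- pigeonhole : an interval [2mu/a, 2(m+1)u/a] inside one piece
  have h2k2 : 2 * (k + 1) ≤ a := by obtain ⟨t, ht⟩ := ha; omega
  have key : ∃ (i : Fin k) (m : ℕ), 2 * (m + 1) ≤ a ∧
      Icc (2 * (m:ℝ) * u / a) (2 * ((m:ℝ) + 1) * u / a) ⊆ I i := by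
    have hpt : ∀ j : Fin (k+1), (2 * ((j:ℕ):ℝ) * u / a) ∈ ⋃ i, I i := fun j => by
      rw [hIunion]; trivial
    choose σ hσ using fun j => Set.mem_iUnion.mp (hpt j)
    obtain ⟨j₁, j₂, hne, heq⟩ := Fintype.exists_ne_map_eq_of_card_lt σ (by simp)
    have hsub : ∀ (p q : Fin (k+1)), p < q → σ p = σ q →
        ∃ (i : Fin k) (m : ℕ), 2 * (m + 1) ≤ a ∧
          Icc (2 * (m:ℝ) * u / a) (2 * ((m:ℝ) + 1) * u / a) ⊆ I i := by
      intro p q hpq hpqσ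
      refine ⟨σ p, p, by have := q.2; omega, ?_⟩
      have h1 : Icc (2 * ((p:ℕ):ℝ) * u / a) (2 * ((q:ℕ):ℝ) * u / a) ⊆ I (σ p) :=
        (hOrd (σ p)).out (hσ p) (hpqσ ▸ hσ q)
      refine subset_trans (Icc_subset_Icc (le_refl _) ?_) h1
      have hq : ((p:ℕ):ℝ) + 1 ≤ ((q:ℕ):ℝ) := by exact_mod_cast hpq
      gcongr
    rcases hne.lt_or_gt with hlt | hlt
    · exact hsub j₁ j₂ hlt heq
    · exact hsub j₂ j₁ hlt heq.symm
  obtain ⟨i, m, hma, hJ⟩ := key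
  -- RHS is bounded above
  have hBnd : ∀ x : Icc (0:ℝ) u, |f ((a:ℝ) * x) - h x| ≤
      M + (Finset.univ.sup' Finset.univ_nonempty fun j : Fin k => |cc j| * u + |dd j|) := by
    intro x
    have hx : (x:ℝ) ∈ ⋃ j, I j := by rw [hIunion]; trivial
    obtain ⟨j, hj⟩ := Set.mem_iUnion.mp hx
    have hhx : h x = cc j * x + dd j := hcd j x hj
    have h1 : |h (x:ℝ)| ≤ |cc j| * u + |dd j| := by
      rw [hhx]
      refine le_trans (abs_add_le _ _) ?_
      have : |cc j * (x:ℝ)| ≤ |cc j| * u := by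
        rw [abs_mul]
        have : |(x:ℝ)| ≤ u := by
          rw [abs_of_nonneg x.2.1]; exact x.2.2
        exact mul_le_mul_of_nonneg_left this (abs_nonneg _)
      linarith
    have h2 : |cc j| * u + |dd j| ≤
        Finset.univ.sup' Finset.univ_nonempty fun j : Fin k => |cc j| * u + |dd j| :=
      Finset.le_sup' (fun j : Fin k => |cc j| * u + |dd j|) (Finset.mem_univ j)
    calc |f ((a:ℝ) * x) - h x| ≤ |f ((a:ℝ) * x)| + |h (x:ℝ)| := abs_sub _ _
      _ ≤ M + (Finset.univ.sup' Finset.univ_nonempty fun j : Fin k => |cc j| * u + |dd j|) := by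
          have := hMg ((a:ℝ) * x); linarith
  have hB : BddAbove (Set.range fun x : Icc (0:ℝ) u => |f ((a:ℝ) * x) - h x|) :=
    ⟨_, by rintro _ ⟨x, rfl⟩; exact hBnd x⟩
  have hIcone : Nonempty (Ico (0:ℝ) u) := ⟨⟨0, le_refl _, hu⟩⟩
  -- Main inequality : each G δ ≤ RHS
  have main : ∀ δ : Ico (0:ℝ) u, (⨅ c : ℝ, ⨅ d : ℝ,
      ⨆ x : Icc (δ:ℝ) ((δ:ℝ) + u), |f x - (c * x + d)|) ≤
      ⨆ x : Icc (0:ℝ) u, |f ((a:ℝ) * x) - h x| := by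
    intro δ
    have hδ0 : 0 ≤ (δ:ℝ) := δ.2.1
    have hδu : (δ:ℝ) < u := δ.2.2
    set c := cc i
    set d := dd i
    have step1 : (⨅ c : ℝ, ⨅ d : ℝ,
        ⨆ x : Icc (δ:ℝ) ((δ:ℝ) + u), |f x - (c * x + d)|) ≤
        ⨆ x : Icc (δ:ℝ) ((δ:ℝ) + u), |f x - (c / a * x + (d + c * (2 * m * u) / a))| := by
      refine le_trans (ciInf_le (hbdd_c _) (c / a)) (ciInf_le (hbdd_d _ _) _)
    refine step1.trans ?_
    have := hIccne (δ:ℝ)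
    refine ciSup_le ?_
    rintro ⟨y, hy1, hy2⟩
    set x := (y + 2 * m * u) / (a:ℝ) with hxdef
    have hax : (a:ℝ) * x = y + 2 * m * u := by
      rw [hxdef]; field_simp
    have hxmem : x ∈ Icc (2 * (m:ℝ) * u / a) (2 * ((m:ℝ) + 1) * u / a) := by
      constructor
      · rw [hxdef, div_le_div_iff₀ haR haR]
        nlinarith
      · rw [hxdef, div_le_div_iff₀ haR haR]
        nlinarith
    have hxu : x ∈ Icc (0:ℝ) u := by
      constructor
      · apply div_nonneg ?_ haR.le; nlinarith
      · have h1 : x ≤ 2 * ((m:ℝ) + 1) * u / a := hxmem.2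
        have h2 : 2 * ((m:ℝ) + 1) * u / a ≤ u := by
          rw [div_le_iff₀ haR]
          have : (2 * ((m:ℝ) + 1)) ≤ (a:ℝ) := by exact_mod_cast hma
          nlinarith
        linarith
    have hfa : f ((a:ℝ) * x) = f y := by
      rw [hax]
      have := (hP.nat_mul (2 * m)) y
      have hc : ((2 * m : ℕ):ℝ) * u = 2 * m * u := by push_cast; ring
      rw [hc] at this
      exact this
    have hhx : h x = c * x + d := hcd i x (hJ hxmem)
    have hval : |f y - (c / a * y + (d + c * (2 * m * u) / a))| = |f ((a:ℝ) * x) - h x| := by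
      rw [hfa, hhx, hxdef]
      congr 1
      field_simp
      ring
    rw [hval]
    exact le_ciSup hB ⟨x, hxu⟩
  -- positivity
  obtain ⟨p, hp, hfp⟩ : ∃ p ∈ Icc (0:ℝ) u, f p ≠ f 0 := by
    by_contra hcon
    push_neg at hcon
    obtain ⟨x₀, y₀, hxy⟩ := hnc
    have hall : ∀ x, f x = f 0 := by
      intro x
      obtain ⟨y, hy, hxy'⟩ := hP.exists_mem_Ico₀ hu x
      rw [hxy']; exact hcon y (Ico_subset_Icc_self hy)
    exact hxy ((hall x₀).trans (hall y₀).symm)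
  have hfu : f u = f 0 := by simpa using hper 0
  have hε : 0 < |f p - f 0| / 2 := by
    have : f p - f 0 ≠ 0 := sub_ne_zero.mpr hfp
    positivity
  have hξ0 : |f p - f 0| / 2 ≤ ⨅ c : ℝ, ⨅ d : ℝ,
      ⨆ x : Icc (0:ℝ) ((0:ℝ) + u), |f x - (c * x + d)| := by
    refine le_ciInf fun c => le_ciInf fun d => ?_
    set S := ⨆ x : Icc (0:ℝ) ((0:ℝ) + u), |f x - (c * x + d)| with hS
    have hbdd : BddAbove (range fun x : Icc (0:ℝ) ((0:ℝ) + u) => |f x - (c * x + d)|) := by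
      obtain ⟨C, hC⟩ := (isCompact_Icc (a := (0:ℝ)) (b := (0:ℝ) + u)).exists_bound_of_continuousOn
        (Continuous.continuousOn ((hf.sub ((continuous_const.mul continuous_id).add continuous_const)).abs))
      exact ⟨C, by rintro _ ⟨x, rfl⟩; simpa using hC x x.2⟩
    have hA : |f p - (c * p + d)| ≤ S :=
      le_ciSup hbdd (⟨p, by constructor <;> [linarith [hp.1]; linarith [hp.2]]⟩ :
        Icc (0:ℝ) ((0:ℝ) + u))
    have hBB : |f 0 - (c * 0 + d)| ≤ S :=
      le_ciSup hbdd (⟨0, by constructor <;> linarith⟩ : Icc (0:ℝ) ((0:ℝ) + u))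
    have hC : |f u - (c * u + d)| ≤ S :=
      le_ciSup hbdd (⟨u, by constructor <;> linarith⟩ : Icc (0:ℝ) ((0:ℝ) + u))
    rw [abs_le] at hA hBB hC
    have hl0 : 0 ≤ (u - p) / u := div_nonneg (by linarith [hp.2]) hu.le
    have hl1 : (u - p) / u ≤ 1 := by rw [div_le_one hu]; linarith [hp.1]
    have hid : f p - f 0 = (f p - (c * p + d)) - ((u - p) / u) * (f 0 - (c * 0 + d))
        - (1 - (u - p) / u) * (f u - (c * u + d)) := by
      rw [hfu]; field_simp; ring
    have h2S : |f p - f 0| ≤ 2 * S := by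
      rw [abs_le]
      constructor <;> nlinarith [hA.1, hA.2, hBB.1, hBB.2, hC.1, hC.2]
    linarith
  have hbLHS : BddAbove (range fun δ : Ico (0:ℝ) u => ⨅ c : ℝ, ⨅ d : ℝ,
      ⨆ x : Icc (δ:ℝ) ((δ:ℝ) + u), |f x - (c * x + d)|) := by
    refine ⟨M, ?_⟩
    rintro _ ⟨δ, rfl⟩
    refine le_trans (le_trans (ciInf_le (hbdd_c _) 0) (ciInf_le (hbdd_d _ _) 0)) ?_
    have := hIccne (δ:ℝ)
    refine ciSup_le fun y => ?_
    simpa using hMg y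
  constructor
  · refine lt_of_lt_of_le hε (le_trans ?_ (le_ciSup hbLHS (⟨0, le_refl _, hu⟩ : Ico (0:ℝ) u)))
    exact hξ0
  · exact ciSup_le main
end

section
/- For u > 0 and an even natural number a with a ≥ 2, if a function h : [0,u] → ℝ is affine on some interval [u₁, u₂] ⊆ [0,u] with u₂ − u₁ ≥ 2u/a, then inf over affine functions ℓ of sup_{x ∈ [u₁,u₂]} |f(a·x) − ℓ(x)| ≥ inf over affine functions ℓ of sup_{y ∈ [0, 2u]} |f(y) − ℓ(y)|, for any u-periodic continuous f : ℝ → ℝ. -/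
/-- If `f` is `u`-periodic and continuous, `a` is an even natural number with `a ≥ 2`,
and `h` is affine on an interval `[u₁,u₂] ⊆ [0,u]` of length at least `2u/a`, then the
best affine approximation error of `x ↦ f(a·x)` on `[u₁,u₂]` is at least the best affine
approximation error of `f` on `[0,2u]`. -/
theorem stmt17 (f : ℝ → ℝ) (u : ℝ) (hu : 0 < u) (hf : Continuous f)
    (hper : ∀ x, f (x + u) = f x)
    (a : ℕ) (ha : Even a) (ha2 : 2 ≤ a)
    (h : ℝ → ℝ) (u₁ u₂ : ℝ) (hsub : Set.Icc u₁ u₂ ⊆ Set.Icc 0 u)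
    (hlen : 2 * u / (a : ℝ) ≤ u₂ - u₁)
    (haff : ∃ c d : ℝ, ∀ x ∈ Set.Icc u₁ u₂, h x = c * x + d) :
    (⨅ c : ℝ, ⨅ d : ℝ, ⨆ y : Set.Icc (0:ℝ) (2 * u), |f y - (c * y + d)|) ≤
      ⨅ c : ℝ, ⨅ d : ℝ, ⨆ x : Set.Icc u₁ u₂, |f ((a : ℝ) * x) - (c * x + d)| := by
  have hA : (0:ℝ) < (a:ℝ) := by
    have : (2:ℝ) ≤ (a:ℝ) := by exact_mod_cast ha2
    linarith
  set A : ℝ := (a:ℝ) with hAdef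
  have hp : Function.Periodic f u := hper
  have hint : ∀ (k : ℤ) (x : ℝ), f (x + k * u) = f x := fun k x => (hp.int_mul k) x
  -- from hlen : 2u ≤ A * (u₂ - u₁)
  have hlen' : 2 * u ≤ A * (u₂ - u₁) := by
    rw [div_le_iff₀ hA] at hlen
    linarith [hlen]
  refine le_ciInf fun c => le_ciInf fun d => ?_
  set S : ℝ := ⨆ x : Set.Icc u₁ u₂, |f (A * x) - (c * x + d)| with hSdef
  have hne : u₁ ≤ u₂ := by nlinarith
  haveI : Nonempty (Set.Icc u₁ u₂) := ⟨⟨u₁, by constructor <;> linarith⟩⟩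
  haveI : Nonempty (Set.Icc (0:ℝ) (2*u)) := ⟨⟨0, by constructor <;> linarith⟩⟩
  have hbdd : BddAbove (Set.range fun x : Set.Icc u₁ u₂ => |f (A * x) - (c * x + d)|) := by
    have hcont : Continuous fun x : Set.Icc u₁ u₂ => |f (A * (x:ℝ)) - (c * (x:ℝ) + d)| := by
      fun_prop
    exact (isCompact_range hcont).bddAbove
  have hS : ∀ x : Set.Icc u₁ u₂, |f (A * x) - (c * x + d)| ≤ S :=
    fun x => le_ciSup hbdd x
  set κ : ℝ := c * ((A * u₁ + u) / A) + d with hκdef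
  -- key pointwise bound
  have key : ∀ y : ℝ, |f y - κ| ≤ S := by
    intro y
    set k : ℤ := ⌈(A * u₁ - y) / u⌉ with hk
    set y₁ : ℝ := y + k * u with hy₁
    have hk1 : A * u₁ ≤ y₁ := by
      have h1 : (A * u₁ - y) / u ≤ (k:ℝ) := Int.le_ceil _
      have h2 : A * u₁ - y ≤ (k:ℝ) * u := by
        rw [div_le_iff₀ hu] at h1; linarith
      simp only [hy₁]; linarith
    have hk2 : y₁ ≤ A * u₁ + u := by
      have h1 : (k:ℝ) < (A * u₁ - y) / u + 1 := Int.ceil_lt_add_one _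
      have h2 : (k:ℝ) * u < (A * u₁ - y) + u := by
        have := (mul_lt_mul_of_pos_right h1 hu)
        rw [add_mul, div_mul_cancel₀ _ hu.ne', one_mul] at this
        linarith
      simp only [hy₁]; linarith
    set x₁ : ℝ := y₁ / A with hx₁def
    set x₂ : ℝ := (y₁ + u) / A with hx₂def
    have hx₁ : x₁ ∈ Set.Icc u₁ u₂ := by
      constructor
      · rw [le_div_iff₀ hA]; nlinarith
      · rw [div_le_iff₀ hA]; nlinarith
    have hx₂ : x₂ ∈ Set.Icc u₁ u₂ := by
      constructor
      · rw [le_div_iff₀ hA]; nlinarith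
      · rw [div_le_iff₀ hA]; nlinarith
    have hfy₁ : f y₁ = f y := hint k y
    have hfy₂ : f (y₁ + u) = f y := by rw [hper y₁, hfy₁]
    have e₁ : |f y - (c * x₁ + d)| ≤ S := by
      have := hS ⟨x₁, hx₁⟩
      have hax : A * x₁ = y₁ := by
        rw [hx₁def, mul_div_cancel₀ _ hA.ne']
      simpa [hax, hfy₁] using this
    have e₂ : |f y - (c * x₂ + d)| ≤ S := by
      have := hS ⟨x₂, hx₂⟩
      have hax : A * x₂ = y₁ + u := by
        rw [hx₂def, mul_div_cancel₀ _ hA.ne']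
      simpa [hax, hfy₂] using this
    set lam : ℝ := (A * u₁ + u - y₁) / u with hlamdef
    have hlam0 : 0 ≤ lam := by
      apply div_nonneg _ hu.le; linarith
    have hlam1 : lam ≤ 1 := by
      rw [div_le_one hu]; linarith
    have hκeq : κ = (1 - lam) * (c * x₁ + d) + lam * (c * x₂ + d) := by
      rw [hκdef, hlamdef, hx₁def, hx₂def]
      field_simp
      ring
    have habs : |f y - κ| ≤ (1 - lam) * |f y - (c * x₁ + d)| + lam * |f y - (c * x₂ + d)| := by
      have : f y - κ = (1 - lam) * (f y - (c * x₁ + d)) + lam * (f y - (c * x₂ + d)) := by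
        rw [hκeq]; ring
      rw [this]
      calc |(1 - lam) * (f y - (c * x₁ + d)) + lam * (f y - (c * x₂ + d))|
          ≤ |(1 - lam) * (f y - (c * x₁ + d))| + |lam * (f y - (c * x₂ + d))| := abs_add_le _ _
        _ = (1 - lam) * |f y - (c * x₁ + d)| + lam * |f y - (c * x₂ + d)| := by
            rw [abs_mul, abs_mul, abs_of_nonneg (by linarith : (0:ℝ) ≤ 1 - lam),
              abs_of_nonneg hlam0]
    nlinarith [e₁, e₂, habs]
  -- now chain the infima
  have hlow : ∀ c' d' : ℝ, (0:ℝ) ≤ ⨆ y : Set.Icc (0:ℝ) (2*u), |f y - (c' * y + d')| :=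
    fun c' d' => Real.iSup_nonneg fun y => abs_nonneg _
  have step1 : (⨅ c' : ℝ, ⨅ d' : ℝ, ⨆ y : Set.Icc (0:ℝ) (2*u), |f y - (c' * y + d')|)
      ≤ ⨅ d' : ℝ, ⨆ y : Set.Icc (0:ℝ) (2*u), |f y - (0 * y + d')| := by
    apply ciInf_le
    refine ⟨0, ?_⟩
    rintro z ⟨c', rfl⟩
    exact Real.iInf_nonneg fun d' => hlow c' d'
  have step2 : (⨅ d' : ℝ, ⨆ y : Set.Icc (0:ℝ) (2*u), |f y - (0 * y + d')|)
      ≤ ⨆ y : Set.Icc (0:ℝ) (2*u), |f y - (0 * y + κ)| := by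
    apply ciInf_le
    refine ⟨0, ?_⟩
    rintro z ⟨d', rfl⟩
    exact hlow 0 d'
  have step3 : (⨆ y : Set.Icc (0:ℝ) (2*u), |f y - (0 * y + κ)|) ≤ S := by
    apply ciSup_le
    intro y
    simpa using key y
  exact le_trans step1 (le_trans step2 step3)
end

section
/- Let m ∈ ℕ, m ≥ 2, and let ψ_m(x) = (1/2^{m−1}) · ∑_{j=0}^{2m−2} (−1)^j · N_{2m}(j+1) · (d^m/dx^m) N_{2m}(2x − j), where N_k denotes the cardinal B-spline of order k. Then ψ_m can be written as ψ_m(x) = ∑_{n=1}^{3m−1} q_n · N_m(2x − n + 1) with q_n = ((−1)^{n+1}/2^{m−1}) · ∑_{j=0}^{m} C(m,j) · N_{2m}(n − j), using the identity (d^m/dx^m) N_{2m}(x) = ∑_{j=0}^{m} (−1)^j · C(m,j) · N_m(x − j). -/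
open MeasureTheory intervalIntegral

/-- The cardinal B-splines: `N₁ = χ_{[0,1]}` and `N_{m+1} = N₁ * N_m` (convolution).
The value at index `0` is a dummy. -/
noncomputable def Bspline : ℕ → ℝ → ℝ
  | 0 => fun _ => 0
  | 1 => fun x => if x ∈ Set.Icc (0:ℝ) 1 then 1 else 0
  | (m + 2) => fun x =>
      ∫ t, (if t ∈ Set.Icc (0:ℝ) 1 then (1:ℝ) else 0) * Bspline (m + 1) (x - t)

lemma B1_integrable : Integrable (Bspline 1) := by
  have : Bspline 1 = Set.indicator (Set.Icc (0:ℝ) 1) (fun _ => (1:ℝ)) := by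
    funext x
    simp [Bspline, Set.indicator]
  rw [this, integrable_indicator_iff measurableSet_Icc]
  exact integrableOn_const (by simp [Real.volume_Icc]) (by simp)

lemma Bspline_succ_eq (k : ℕ) (x : ℝ) :
    Bspline (k + 2) x = ∫ t in (x - 1)..x, Bspline (k + 1) t := by
  have h1 : Bspline (k + 2) x
      = ∫ t, Set.indicator (Set.Icc (0:ℝ) 1) (fun t => Bspline (k + 1) (x - t)) t := by
    show (∫ t, (if t ∈ Set.Icc (0:ℝ) 1 then (1:ℝ) else 0) * Bspline (k + 1) (x - t)) = _
    congr 1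
    funext t
    by_cases h : t ∈ Set.Icc (0:ℝ) 1 <;> simp [Set.indicator, h]
  rw [h1, MeasureTheory.integral_indicator measurableSet_Icc]
  have h2 : (∫ t in Set.Icc (0:ℝ) 1, Bspline (k + 1) (x - t))
      = ∫ t in (0:ℝ)..1, Bspline (k + 1) (x - t) := by
    rw [intervalIntegral.integral_of_le (by norm_num : (0:ℝ) ≤ 1),
      integral_Icc_eq_integral_Ioc]
  rw [h2, intervalIntegral.integral_comp_sub_left (Bspline (k+1)) x]
  norm_num

/-- Continuity of `Bspline (k+2)`, with interval integrability as companion. -/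
lemma Bspline_cont (k : ℕ) : Continuous (Bspline (k + 2)) := by
  induction k with
  | zero =>
      have hint : ∀ a b : ℝ, IntervalIntegrable (Bspline 1) volume a b :=
        fun a b => B1_integrable.intervalIntegrable
      have hF : Continuous fun y => ∫ t in (0:ℝ)..y, Bspline 1 t :=
        intervalIntegral.continuous_primitive hint 0
      have : Bspline 2 = fun x => (∫ t in (0:ℝ)..x, Bspline 1 t)
          - ∫ t in (0:ℝ)..(x - 1), Bspline 1 t := by
        funext x
        rw [Bspline_succ_eq]
        rw [← intervalIntegral.integral_add_adjacent_intervals (hint 0 (x-1)) (hint (x-1) x)]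
        ring
      rw [this]
      exact hF.sub (hF.comp (continuous_id.sub continuous_const))
  | succ n ih =>
      have hint : ∀ a b : ℝ, IntervalIntegrable (Bspline (n + 2)) volume a b :=
        fun a b => ih.intervalIntegrable a b
      have hF : Continuous fun y => ∫ t in (0:ℝ)..y, Bspline (n + 2) t :=
        intervalIntegral.continuous_primitive hint 0
      have : Bspline (n + 3) = fun x => (∫ t in (0:ℝ)..x, Bspline (n + 2) t)
          - ∫ t in (0:ℝ)..(x - 1), Bspline (n + 2) t := by
        funext x
        rw [show n + 3 = (n + 1) + 2 by ring, Bspline_succ_eq]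
        rw [← intervalIntegral.integral_add_adjacent_intervals (hint 0 (x-1)) (hint (x-1) x)]
        ring
      rw [this]
      exact hF.sub (hF.comp (continuous_id.sub continuous_const))

/-- Strict support vanishing. -/
lemma Bspline_zero_of_lt (k : ℕ) : ∀ x : ℝ, x < 0 → Bspline (k + 1) x = 0 := by
  induction k with
  | zero => intro x hx; simp only [Bspline, Set.mem_Icc]; rw [if_neg]; push_neg; intro h; linarith
  | succ n ih =>
      intro x hx
      rw [show n + 1 + 1 = n + 2 by ring, Bspline_succ_eq]
      rw [intervalIntegral.integral_congr (g := fun _ => (0:ℝ))]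
      · simp
      · intro t ht
        rw [Set.uIcc_of_le (by linarith : x - 1 ≤ x), Set.mem_Icc] at ht
        exact ih t (by linarith [ht.2])

lemma Bspline_zero_of_gt (k : ℕ) : ∀ x : ℝ, (k : ℝ) + 1 < x → Bspline (k + 1) x = 0 := by
  induction k with
  | zero => intro x hx; simp only [Bspline, Set.mem_Icc]; rw [if_neg]; push_neg; intro h; norm_num at hx; linarith
  | succ n ih =>
      intro x hx
      rw [show n + 1 + 1 = n + 2 by ring, Bspline_succ_eq]
      rw [intervalIntegral.integral_congr (g := fun _ => (0:ℝ))]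
      · simp
      · intro t ht
        rw [Set.uIcc_of_le (by linarith : x - 1 ≤ x), Set.mem_Icc] at ht
        push_cast at hx ⊢
        exact ih t (by linarith [ht.1])

/-- Closed support vanishing for `k ≥ 2` (continuity extends to boundary). -/
lemma Bspline_zero_of_le (k : ℕ) (x : ℝ) (h : x ≤ 0 ∨ ((k : ℝ) + 2) ≤ x) :
    Bspline (k + 2) x = 0 := by
  rcases h with h | h
  · have heq : Set.EqOn (Bspline (k + 2)) (fun _ => (0:ℝ)) (Set.Iio 0) := fun t ht =>
      Bspline_zero_of_lt (k + 1) t ht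
    have := heq.closure (Bspline_cont k) continuous_const
    rw [closure_Iio] at this
    exact this h
  · have heq : Set.EqOn (Bspline (k + 2)) (fun _ => (0:ℝ)) (Set.Ioi ((k:ℝ) + 2)) := by
      intro t ht
      have := Bspline_zero_of_gt (k + 1) t (by push_cast; linarith [Set.mem_Ioi.1 ht])
      simpa using this
    have := heq.closure (Bspline_cont k) continuous_const
    rw [closure_Ioi] at this
    exact this h

lemma Bspline_hasDerivAt (k : ℕ) (x : ℝ) :
    HasDerivAt (Bspline (k + 3)) (Bspline (k + 2) x - Bspline (k + 2) (x - 1)) x := by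
  have hc : Continuous (Bspline (k + 2)) := Bspline_cont k
  have hint : ∀ a b : ℝ, IntervalIntegrable (Bspline (k + 2)) volume a b :=
    fun a b => hc.intervalIntegrable a b
  have hF : ∀ y : ℝ, HasDerivAt (fun u => ∫ t in (0:ℝ)..u, Bspline (k + 2) t)
      (Bspline (k + 2) y) y := fun y =>
    intervalIntegral.integral_hasDerivAt_right (hint 0 y)
      (hc.stronglyMeasurable.stronglyMeasurableAtFilter) hc.continuousAt
  have hfun : Bspline (k + 3) = fun x => (∫ t in (0:ℝ)..x, Bspline (k + 2) t)
      - ∫ t in (0:ℝ)..(x - 1), Bspline (k + 2) t := by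
    funext y
    rw [show k + 3 = (k + 1) + 2 by ring, Bspline_succ_eq]
    rw [← intervalIntegral.integral_add_adjacent_intervals (hint 0 (y-1)) (hint (y-1) y)]
    ring
  rw [hfun]
  have h2 : HasDerivAt (fun u : ℝ => ∫ t in (0:ℝ)..(u - 1), Bspline (k + 2) t)
      (Bspline (k + 2) (x - 1)) x := by
    have := (hF (x - 1)).comp x ((hasDerivAt_id x).sub_const 1)
    simpa [Function.comp_def] using this
  exact (hF x).sub h2

lemma diff_sum (g : ℝ → ℝ) (i : ℕ) (x : ℝ) :
    ∑ j ∈ Finset.range (i + 1),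
        (-1:ℝ)^j * (i.choose j : ℝ) * (g (x - j) - g (x - j - 1)) =
    ∑ j ∈ Finset.range (i + 2), (-1:ℝ)^j * ((i+1).choose j : ℝ) * g (x - j) := by
  simp only [mul_sub]
  rw [Finset.sum_sub_distrib]
  rw [show i + 2 = (i + 1) + 1 from rfl,
    Finset.sum_range_succ' (fun j => (-1:ℝ)^j * ((i+1).choose j : ℝ) * g (x - j)) (i+1)]
  rw [Finset.sum_range_succ' (fun j => (-1:ℝ)^j * (i.choose j : ℝ) * g (x - j)) i]
  have hext : ∑ j ∈ Finset.range i,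
        (-1:ℝ)^(j+1) * (i.choose (j+1) : ℝ) * g (x - (↑(j+1) : ℕ)) =
      ∑ j ∈ Finset.range (i+1), (-1:ℝ)^(j+1) * (i.choose (j+1) : ℝ) * g (x - (↑(j+1) : ℕ)) := by
    rw [Finset.sum_range_succ, Nat.choose_succ_self]
    simp
  rw [hext]
  rw [sub_eq_iff_eq_add]
  rw [show ∀ a b c : ℝ, a + b + c = (a + c) + b from fun a b c => by ring]
  congr 1
  · rw [← Finset.sum_add_distrib]
    apply Finset.sum_congr rfl
    intro j _
    have hp : (((i+1).choose (j+1) : ℕ) : ℝ) = (i.choose j : ℝ) + (i.choose (j+1) : ℝ) := by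
      rw [Nat.choose_succ_succ]; push_cast; ring
    rw [hp]
    push_cast
    ring
  · simp

lemma Bspline_iteratedDeriv (i : ℕ) : ∀ (k : ℕ) (x : ℝ),
    iteratedDeriv i (Bspline (k + 2 + i)) x =
      ∑ j ∈ Finset.range (i + 1),
        (-1:ℝ)^j * (i.choose j : ℝ) * Bspline (k + 2) (x - j) := by
  induction i with
  | zero => intro k x; simp [iteratedDeriv_zero]
  | succ i ih =>
      intro k x
      have hfun : iteratedDeriv i (Bspline (k + 2 + (i + 1)))
          = fun y => ∑ j ∈ Finset.range (i + 1),
              (-1:ℝ)^j * (i.choose j : ℝ) * Bspline (k + 3) (y - j) := by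
        funext y
        rw [show k + 2 + (i + 1) = (k + 1) + 2 + i by ring]
        rw [ih (k + 1) y]
      rw [iteratedDeriv_succ, hfun]
      have hd : HasDerivAt (fun y => ∑ j ∈ Finset.range (i + 1),
            (-1:ℝ)^j * (i.choose j : ℝ) * Bspline (k + 3) (y - j))
          (∑ j ∈ Finset.range (i + 1), (-1:ℝ)^j * (i.choose j : ℝ) *
            (Bspline (k + 2) (x - j) - Bspline (k + 2) (x - j - 1))) x := by
        apply HasDerivAt.fun_sum
        intro j _
        have h1 : HasDerivAt (fun y : ℝ => Bspline (k + 3) (y - j))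
            (Bspline (k + 2) (x - j) - Bspline (k + 2) (x - j - 1)) x := by
          have := (Bspline_hasDerivAt k (x - j)).comp x ((hasDerivAt_id x).sub_const (j:ℝ))
          simpa [sub_sub, Function.comp_def] using this
        simpa using h1.const_mul ((-1:ℝ)^j * (i.choose j : ℝ))
      rw [hd.deriv]
      exact diff_sum (Bspline (k + 2)) i x

/-- The Chui–Wang spline wavelet
`ψ_m(x) = (1/2^{m−1}) ∑_{j=0}^{2m−2} (−1)^j N_{2m}(j+1) (d^m/dx^m)N_{2m}(2x−j)`
can be written as `ψ_m(x) = ∑_{n=1}^{3m−1} q_n N_m(2x−n+1)` with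
`q_n = ((−1)^{n+1}/2^{m−1}) ∑_{j=0}^{m} C(m,j) N_{2m}(n−j)`, using the identity
`(d^m/dx^m) N_{2m}(x) = ∑_{j=0}^{m} (−1)^j C(m,j) N_m(x−j)`. -/
theorem stmt19 (m : ℕ) (hm : 2 ≤ m) :
    (∀ x : ℝ, iteratedDeriv m (Bspline (2 * m)) x =
      ∑ j ∈ Finset.range (m + 1),
        (-1 : ℝ) ^ j * (Nat.choose m j : ℝ) * Bspline m (x - (j : ℝ))) ∧
    (∀ x : ℝ,
      (1 / 2 ^ (m - 1) : ℝ) *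
          ∑ j ∈ Finset.range (2 * m - 1),
            (-1 : ℝ) ^ j * Bspline (2 * m) ((j : ℝ) + 1) *
              iteratedDeriv m (Bspline (2 * m)) (2 * x - (j : ℝ)) =
        ∑ n ∈ Finset.Icc 1 (3 * m - 1),
          (((-1 : ℝ) ^ (n + 1) / 2 ^ (m - 1)) *
              ∑ j ∈ Finset.range (m + 1),
                (Nat.choose m j : ℝ) * Bspline (2 * m) ((n : ℝ) - (j : ℝ))) *
            Bspline m (2 * x - (n : ℝ) + 1)) := by
  obtain ⟨a, ha⟩ : ∃ a, m = a + 2 := ⟨m - 2, by omega⟩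
  have h1 : ∀ x : ℝ, iteratedDeriv m (Bspline (2 * m)) x =
      ∑ j ∈ Finset.range (m + 1),
        (-1 : ℝ) ^ j * (Nat.choose m j : ℝ) * Bspline m (x - (j : ℝ)) := by
    intro x
    have := Bspline_iteratedDeriv m a x
    rw [show a + 2 + m = 2 * m by omega, show a + 2 = m from ha.symm] at this
    exact this
  refine ⟨h1, fun x => ?_⟩
  set G : ℕ × ℕ → ℝ := fun q =>
    ((-1 : ℝ) ^ (q.1 + 1) / 2 ^ (m - 1)) *
      ((Nat.choose m q.2 : ℝ) * Bspline (2 * m) ((q.1 : ℝ) - (q.2 : ℝ))) *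
      Bspline m (2 * x - (q.1 : ℝ) + 1) with hG
  set P : Finset (ℕ × ℕ) := Finset.range (2 * m - 1) ×ˢ Finset.range (m + 1) with hP
  set T : Finset (ℕ × ℕ) := Finset.Icc 1 (3 * m - 1) ×ˢ Finset.range (m + 1) with hT
  set e : ℕ × ℕ → ℕ × ℕ := fun p => (p.1 + p.2 + 1, p.2) with he
  have hRHS : (∑ n ∈ Finset.Icc 1 (3 * m - 1),
        (((-1 : ℝ) ^ (n + 1) / 2 ^ (m - 1)) *
            ∑ j ∈ Finset.range (m + 1),
              (Nat.choose m j : ℝ) * Bspline (2 * m) ((n : ℝ) - (j : ℝ))) *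
          Bspline m (2 * x - (n : ℝ) + 1)) = ∑ q ∈ T, G q := by
    rw [hT, Finset.sum_product]
    apply Finset.sum_congr rfl
    intro n _
    rw [Finset.mul_sum, Finset.sum_mul]
  have hLHS : ((1 / 2 ^ (m - 1) : ℝ) *
        ∑ j ∈ Finset.range (2 * m - 1),
          (-1 : ℝ) ^ j * Bspline (2 * m) ((j : ℝ) + 1) *
            iteratedDeriv m (Bspline (2 * m)) (2 * x - (j : ℝ))) =
      ∑ p ∈ P, G (e p) := by
    rw [hP, Finset.sum_product, Finset.mul_sum]
    apply Finset.sum_congr rfl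
    intro j' _
    rw [h1 (2 * x - (j' : ℝ)), Finset.mul_sum, Finset.mul_sum]
    apply Finset.sum_congr rfl
    intro i _
    simp only [hG, he]
    have hc1 : ((j' + i + 1 : ℕ) : ℝ) - (i : ℝ) = (j' : ℝ) + 1 := by push_cast; ring
    have hc2 : 2 * x - ((j' + i + 1 : ℕ) : ℝ) + 1 = 2 * x - (j' : ℝ) - (i : ℝ) := by
      push_cast; ring
    rw [hc1, hc2]
    ring
  have hinj : ∀ p ∈ P, ∀ q ∈ P, e p = e q → p = q := by
    intro p _ q _ hpq
    simp only [he, Prod.mk.injEq] at hpq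
    exact Prod.ext (by omega) hpq.2
  have hsub : P.image e ⊆ T := by
    intro q hq
    simp only [Finset.mem_image, hP, Finset.mem_product, Finset.mem_range] at hq
    obtain ⟨p, ⟨hp1, hp2⟩, rfl⟩ := hq
    simp only [hT, Finset.mem_product, Finset.mem_Icc, Finset.mem_range, he]
    omega
  have hzero : ∀ q ∈ T, q ∉ P.image e → G q = 0 := by
    intro q hqT hqI
    obtain ⟨n, j⟩ := q
    simp only [hT, Finset.mem_product, Finset.mem_Icc, Finset.mem_range] at hqT
    have hcase : n ≤ j ∨ 2 * m + j ≤ n := by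
      by_contra hcon
      push_neg at hcon
      apply hqI
      simp only [Finset.mem_image, hP, Finset.mem_product, Finset.mem_range, he,
        Prod.mk.injEq, Prod.exists]
      exact ⟨n - j - 1, j, ⟨by omega, by omega⟩, by omega, rfl⟩
    have hB : Bspline (2 * m) ((n : ℝ) - (j : ℝ)) = 0 := by
      rw [show 2 * m = (2 * a + 2) + 2 by omega]
      apply Bspline_zero_of_le
      rcases hcase with h | h
      · left
        have : (n : ℝ) ≤ (j : ℝ) := by exact_mod_cast h
        linarith
      · right
        have h' : ((2 * m + j : ℕ) : ℝ) ≤ (n : ℝ) := by exact_mod_cast h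
        push_cast [ha] at h'
        push_cast
        linarith
    simp only [hG]
    rw [hB]; ring
  rw [hLHS, hRHS, ← Finset.sum_image hinj]
  exact Finset.sum_subset hsub hzero
end
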